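/- Schur values at (x,−x,−x^{−2}) for k even, l odd: Let k be an even nonnegative integer and l an odd positive integer, and let x be a complex number with x ≠ 0 and x⁶ ≠ 1. Then S_{(k+2l+1,k+l+1,0)}(x,−x,−x^{−2}) = −(x^{−k−1} − x^{−k−3l−4}) / (x³ − x^{−3}) and S_{(k+2l+1,l,0)}(x,−x,−x^{−2}) = −(x^{k+3l+4} − x^{k+1}) / (x³ − x^{−3}). -/

import Mathlib

/-- The Schur value `S_{(a,b,c)}(t₁,t₂,t₃) = det((t_j^{m_i})) / ∏_{i<j}(t_i − t_j)` with
`(m₁,m₂,m₃) = (a+2,b+1,c)`: the character of the irreducible `GL(3,ℂ)`-representation with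
highest weight `(a,b,c)` at the regular element `(t₁,t₂,t₃)`. -/
noncomputable def schur (a b c : ℕ) (t₁ t₂ t₃ : ℂ) : ℂ :=
  (Matrix.of ![![t₁ ^ (a + 2), t₂ ^ (a + 2), t₃ ^ (a + 2)],
      ![t₁ ^ (b + 1), t₂ ^ (b + 1), t₃ ^ (b + 1)],
      ![t₁ ^ c, t₂ ^ c, t₃ ^ c]]).det /
    ((t₁ - t₂) * (t₁ - t₃) * (t₂ - t₃))

/-- The character `Θ_{k,l}` of the irreducible `G₂(ℂ)`-representation with highest weight
`kω₁ + lω₂`, evaluated at the element `(x, −x, −x⁻²)` of `SL(3,ℂ) ⊂ G₂(ℂ)` via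
Proposition 24.48 of Fulton–Harris. -/
noncomputable def thetaG2 (k l : ℕ) (x : ℂ) : ℂ :=
  (schur (k + 2 * l + 1) (k + l + 1) 0 x (-x) (-(x ^ 2)⁻¹) -
      schur (k + 2 * l + 1) l 0 x (-x) (-(x ^ 2)⁻¹)) /
    (schur 1 1 0 x (-x) (-(x ^ 2)⁻¹) - schur 1 0 0 x (-x) (-(x ^ 2)⁻¹))

/-- Schur values at `(x,−x,−x⁻²)` for `k` even and `l` odd:
`S_{(k+2l+1,k+l+1,0)} = −(x^{−k−1} − x^{−k−3l−4})/(x³ − x⁻³)` and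
`S_{(k+2l+1,l,0)} = −(x^{k+3l+4} − x^{k+1})/(x³ − x⁻³)`. -/
theorem g2SchurValues (k l : ℕ) (hk : Even k) (hl : Odd l) (x : ℂ) (hx : x ≠ 0)
    (hx6 : x ^ 6 ≠ 1) :
    schur (k + 2 * l + 1) (k + l + 1) 0 x (-x) (-(x ^ 2)⁻¹) =
        -((x⁻¹ ^ (k + 1) - x⁻¹ ^ (k + 3 * l + 4)) / (x ^ 3 - x⁻¹ ^ 3)) ∧
      schur (k + 2 * l + 1) l 0 x (-x) (-(x ^ 2)⁻¹) =
        -((x ^ (k + 3 * l + 4) - x ^ (k + 1)) / (x ^ 3 - x⁻¹ ^ 3)) := by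
  obtain ⟨m, rfl⟩ := hk
  obtain ⟨n, rfl⟩ := hl
  have hx2 : x ^ 2 ≠ 0 := pow_ne_zero _ hx
  have hc3 : x ^ 3 ≠ 1 := fun h => hx6 (by rw [show (6:ℕ) = 3*2 by norm_num, pow_mul, h, one_pow])
  have hc3' : x ^ 3 ≠ -1 := fun h => hx6 (by rw [show (6:ℕ) = 3*2 by norm_num, pow_mul, h]; ring)
  have hne4 : x ^ 3 - x⁻¹ ^ 3 ≠ 0 := by
    rw [sub_ne_zero, inv_pow]
    intro h
    apply hx6
    rw [show (6:ℕ) = 3+3 by norm_num, pow_add]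
    nth_rewrite 2 [h]
    exact mul_inv_cancel₀ (pow_ne_zero _ hx)
  have h1 : x - -x ≠ 0 := by
    intro h; rw [sub_neg_eq_add, ← two_mul, mul_eq_zero] at h
    rcases h with h | h
    · exact two_ne_zero h
    · exact hx h
  have h2 : x - -(x ^ 2)⁻¹ ≠ 0 := by
    rw [sub_neg_eq_add]
    intro h
    apply hc3'
    field_simp at h
    linear_combination h
  have h3 : -x - -(x ^ 2)⁻¹ ≠ 0 := by
    rw [sub_neg_eq_add]
    intro h
    apply hc3
    field_simp at h
    linear_combination -h
  constructor
  · unfold schur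
    rw [Matrix.det_fin_three]
    simp only [Matrix.of_apply, Matrix.cons_val', Matrix.cons_val_zero, Matrix.cons_val_one,
      Matrix.head_cons, Matrix.empty_val', Matrix.cons_val_fin_one, Matrix.head_fin_const,
      Matrix.cons_val_two, Matrix.tail_cons, pow_zero]
    have o1 : Odd (m + m + 2 * (2 * n + 1) + 1 + 2) := ⟨m + 2 * n + 2, by ring⟩
    have o2 : Odd (m + m + (2 * n + 1) + 1 + 1) := ⟨m + n + 1, by ring⟩
    rw [o1.neg_pow, o1.neg_pow, o2.neg_pow, o2.neg_pow, ← neg_div,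
      div_eq_div_iff (mul_ne_zero (mul_ne_zero h1 h2) h3) hne4]
    simp only [inv_pow]
    field_simp
    have hxN : x ^ (29 + 12 * m + 20 * n) * x⁻¹ ^ (29 + 12 * m + 20 * n) = 1 := by
      rw [← mul_pow, mul_inv_cancel₀ hx, one_pow]
    ring
  · unfold schur
    rw [Matrix.det_fin_three]
    simp only [Matrix.of_apply, Matrix.cons_val', Matrix.cons_val_zero, Matrix.cons_val_one,
      Matrix.head_cons, Matrix.empty_val', Matrix.cons_val_fin_one, Matrix.head_fin_const,
      Matrix.cons_val_two, Matrix.tail_cons, pow_zero]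
    have o1 : Odd (m + m + 2 * (2 * n + 1) + 1 + 2) := ⟨m + 2 * n + 2, by ring⟩
    have e2 : Even (2 * n + 1 + 1) := ⟨n + 1, by ring⟩
    rw [o1.neg_pow, o1.neg_pow, e2.neg_pow, e2.neg_pow, ← neg_div,
      div_eq_div_iff (mul_ne_zero (mul_ne_zero h1 h2) h3) hne4]
    simp only [inv_pow]
    field_simp
    have hxN : x ^ (27 + 8 * m + 20 * n) * x⁻¹ ^ (27 + 8 * m + 20 * n) = 1 := by
      rw [← mul_pow, mul_inv_cancel₀ hx, one_pow]
    ring
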